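/- Let (X_j, Y_j), j ≥ 1, be i.i.d. pairs of real random variables with 0 < E|X₁|, E[X₁²] < ∞, and E[Y₁ | X₁] = β₁ X₁ almost surely, and suppose U₁ = Y₁ − β₁ X₁ satisfies Var(U₁) < ∞ and E|U₁ X₁| < ∞. Then the residual variance estimator n⁻¹ Σ_{j=1}ⁿ (Y_j − β̂₁ⁿ X_j)² converges in probability to Var(U₁) as n → ∞, where β̂₁ⁿ = (Σ_{j=1}ⁿ sign(X_j) Y_j) / (Σ_{j=1}ⁿ |X_j|) (defined arbitrarily on the event where the denominator vanishes). -/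

import Mathlib

open MeasureTheory ProbabilityTheory Filter
open Topology


lemma measurable_realSign : Measurable Real.sign := by
  have h : Real.sign = fun r : ℝ => if r < 0 then (-1 : ℝ) else if 0 < r then 1 else 0 :=
    funext fun r => rfl
  rw [h]
  exact Measurable.ite (measurableSet_lt measurable_id measurable_const) measurable_const
    (Measurable.ite (measurableSet_lt measurable_const measurable_id) measurable_const
      measurable_const)

lemma realSign_mul_self (x : ℝ) : Real.sign x * x = |x| := by
  rcases lt_trichotomy x 0 with h | h | h
  · rw [Real.sign_of_neg h, abs_of_neg h]; ring
  · simp [h]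
  · rw [Real.sign_of_pos h, abs_of_pos h]; ring

lemma abs_realSign_le_one (x : ℝ) : |Real.sign x| ≤ 1 := by
  rcases Real.sign_apply_eq x with h | h | h <;> rw [h] <;> norm_num

lemma slln_pair {Ω : Type*} [MeasurableSpace Ω] (μ : Measure Ω) [IsProbabilityMeasure μ]
    (Z : ℕ → Ω → ℝ × ℝ) (hmeas : ∀ j, Measurable (Z j))
    (hindep : iIndepFun Z μ)
    (hident : ∀ j, μ.map (Z j) = μ.map (Z 0))
    (g : ℝ × ℝ → ℝ) (hg : Measurable g)
    (hint : Integrable (fun ω => g (Z 0 ω)) μ) :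
    ∀ᵐ ω ∂μ, Tendsto (fun n : ℕ => (n : ℝ)⁻¹ * ∑ j ∈ Finset.range n, g (Z j ω)) atTop
      (𝓝 (∫ ω, g (Z 0 ω) ∂μ)) := by
  have h := strong_law_ae (fun j ω => g (Z j ω)) hint
    (fun i j hij => ((hindep.indepFun hij).comp hg hg))
    (fun j => IdentDistrib.comp ⟨(hmeas j).aemeasurable, (hmeas 0).aemeasurable, hident j⟩ hg)
  filter_upwards [h] with ω hω
  simpa [smul_eq_mul] using hω


/-- For i.i.d. pairs with `0 < E|X₁|`, `E[X₁²] < ∞`,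
`E[Y₁ | X₁] = β₁X₁` a.s., `Var(U₁) < ∞` and `E|U₁X₁| < ∞`, the residual
variance estimator `n⁻¹ Σ (Y_j − β̂₁ⁿ X_j)²` converges in probability to
`Var(U₁)`. -/
theorem statement10
    {Ω : Type*} [MeasurableSpace Ω] (μ : Measure Ω) [IsProbabilityMeasure μ]
    (X Y : ℕ → Ω → ℝ)
    (hmeas : ∀ j, Measurable (fun ω => (X j ω, Y j ω)))
    -- i.i.d. pairs
    (hindep : iIndepFun (fun j ω => (X j ω, Y j ω)) μ)
    (hident : ∀ j, μ.map (fun ω => (X j ω, Y j ω)) = μ.map (fun ω => (X 0 ω, Y 0 ω)))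
    (hYint : Integrable (Y 0) μ)
    (hXpos : 0 < ∫ ω, |X 0 ω| ∂μ)
    (hXsq : MemLp (X 0) 2 μ)
    (β1 : ℝ)
    (hA2 : μ[Y 0 | MeasurableSpace.comap (X 0) inferInstance]
        =ᵐ[μ] fun ω => β1 * X 0 ω)
    (U : Ω → ℝ) (hU : U = fun ω => Y 0 ω - β1 * X 0 ω)
    (hUvar : MemLp U 2 μ)
    (hUX : Integrable (fun ω => U ω * X 0 ω) μ)
    (βhat : ℕ → Ω → ℝ)
    (hβhat : βhat = fun (n : ℕ) (ω : Ω) =>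
      (∑ j ∈ Finset.range n, Real.sign (X j ω) * Y j ω) /
        ∑ j ∈ Finset.range n, |X j ω|) :
    TendstoInMeasure μ
      (fun (n : ℕ) (ω : Ω) =>
        (n : ℝ)⁻¹ * ∑ j ∈ Finset.range n, (Y j ω - βhat n ω * X j ω) ^ 2)
      atTop (fun _ => ProbabilityTheory.variance U μ) := by
  -- basic measurability
  have hXm : ∀ j, Measurable (X j) := fun j => measurable_fst.comp (hmeas j)
  have hYm : ∀ j, Measurable (Y j) := fun j => measurable_snd.comp (hmeas j)
  -- conditional expectation setup
  have hm : MeasurableSpace.comap (X 0) inferInstance ≤ ‹MeasurableSpace Ω› :=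
    (hXm 0).comap_le
  have hX0m : Measurable[MeasurableSpace.comap (X 0) inferInstance] (X 0) :=
    measurable_iff_comap_le.mpr le_rfl
  have hXint : Integrable (X 0) μ := hXsq.integrable one_le_two
  -- Integrable sign(X0) * Y0
  have hsY : Integrable (fun ω => Real.sign (X 0 ω) * Y 0 ω) μ := by
    refine Integrable.mono' hYint.abs
      (((measurable_realSign.comp (hXm 0)).mul (hYm 0)).aestronglyMeasurable) ?_
    filter_upwards with ω
    rw [Real.norm_eq_abs, abs_mul]
    calc |Real.sign (X 0 ω)| * |Y 0 ω| ≤ 1 * |Y 0 ω| := by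
          gcongr; exact abs_realSign_le_one _
      _ = |Y 0 ω| := one_mul _
  -- E Y = β1 E X
  have hEY : ∫ ω, Y 0 ω ∂μ = β1 * ∫ ω, X 0 ω ∂μ := by
    rw [← integral_condExp hm (f := Y 0), integral_congr_ae hA2, integral_const_mul]
  -- E[sign(X0) Y0] = β1 * E|X0|
  have hEsY : ∫ ω, Real.sign (X 0 ω) * Y 0 ω ∂μ = β1 * ∫ ω, |X 0 ω| ∂μ := by
    have hsm : StronglyMeasurable[MeasurableSpace.comap (X 0) inferInstance]
        (fun ω => Real.sign (X 0 ω)) :=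
      (measurable_realSign.comp hX0m).stronglyMeasurable
    have hpull := condExp_mul_of_stronglyMeasurable_left (μ := μ) hsm hsY hYint
    calc ∫ ω, Real.sign (X 0 ω) * Y 0 ω ∂μ
        = ∫ ω, (μ[(fun ω => Real.sign (X 0 ω)) * Y 0|MeasurableSpace.comap (X 0) inferInstance]) ω ∂μ :=
          (integral_condExp hm).symm
      _ = ∫ ω, Real.sign (X 0 ω) * (β1 * X 0 ω) ∂μ := by
          refine integral_congr_ae (hpull.trans ?_)
          filter_upwards [hA2] with ω hω
          simp only [Pi.mul_apply]
          rw [hω]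
      _ = β1 * ∫ ω, |X 0 ω| ∂μ := by
          rw [← integral_const_mul]
          congr 1
          funext ω
          rw [← realSign_mul_self (X 0 ω)]
          ring
  -- E U = 0 and variance = E U^2
  have hEU : ∫ ω, U ω ∂μ = 0 := by
    rw [hU, integral_sub hYint (hXint.const_mul β1), integral_const_mul, hEY, sub_self]
  have hVar : variance U μ = ∫ ω, U ω ^ 2 ∂μ := by
    rw [variance_eq_sub hUvar]
    simp only [Pi.pow_apply] at *
    rw [hEU]
    ring
  -- strong laws
  have slln := fun g hg hint => slln_pair μ (fun j ω => (X j ω, Y j ω)) hmeas hindep hident g hg hint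
  have h1 := slln (fun p => Real.sign p.1 * p.2)
    ((measurable_realSign.comp measurable_fst).mul measurable_snd) hsY
  have h2 := slln (fun p => |p.1|) measurable_fst.abs hXint.abs
  have h3 := slln (fun p => (p.2 - β1 * p.1) ^ 2)
    ((measurable_snd.sub (measurable_const.mul measurable_fst)).pow_const 2)
    (by simpa [hU] using hUvar.integrable_sq)
  have h4 := slln (fun p => (p.2 - β1 * p.1) * p.1)
    ((measurable_snd.sub (measurable_const.mul measurable_fst)).mul measurable_fst)
    (by simpa [hU] using hUX)
  have h5 := slln (fun p => p.1 ^ 2) (measurable_fst.pow_const 2) hXsq.integrable_sq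
  rw [hEsY] at h1
  have h3' : ∀ᵐ ω ∂μ, Tendsto
      (fun n : ℕ => (n : ℝ)⁻¹ * ∑ j ∈ Finset.range n, (Y j ω - β1 * X j ω) ^ 2) atTop
      (𝓝 (variance U μ)) := by
    rw [hVar, hU]
    exact h3
  -- measurability of the estimators
  have hβm : ∀ n, Measurable (βhat n) := by
    rw [hβhat]
    exact fun n =>
      (Finset.measurable_sum _ fun j _ => (measurable_realSign.comp (hXm j)).mul (hYm j)).div
        (Finset.measurable_sum _ fun j _ => (hXm j).abs)
  refine tendstoInMeasure_of_tendsto_ae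
    (fun n => (measurable_const.mul (Finset.measurable_sum _ fun j _ =>
      ((hYm j).sub ((hβm n).mul (hXm j))).pow_const 2)).aestronglyMeasurable) ?_
  -- pointwise argument
  filter_upwards [h1, h2, h3', h4, h5] with ω hw1 hw2 hw3 hw4 hw5
  set I := ∫ ω, |X 0 ω| ∂μ with hI
  have hIne : I ≠ 0 := ne_of_gt hXpos
  -- βhat n ω → β1
  have hβ : Tendsto (fun n => βhat n ω) atTop (𝓝 β1) := by
    have hdiv := hw1.div hw2 hIne
    have heq : ∀ᶠ n : ℕ in atTop,
        ((n : ℝ)⁻¹ * ∑ j ∈ Finset.range n, Real.sign (X j ω) * Y j ω) /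
          ((n : ℝ)⁻¹ * ∑ j ∈ Finset.range n, |X j ω|) = βhat n ω := by
      filter_upwards [eventually_ge_atTop 1] with n hn
      rw [hβhat]
      exact mul_div_mul_left _ _ (inv_ne_zero (Nat.cast_ne_zero.mpr (by omega)))
    have := hdiv.congr' heq
    rwa [mul_div_assoc, div_self hIne, mul_one] at this
  have hc : Tendsto (fun n => β1 - βhat n ω) atTop (𝓝 0) := by
    have := tendsto_const_nhds (x := β1) (f := atTop (α := ℕ)) |>.sub hβ
    simpa using this
  -- algebraic decomposition
  have hsum : ∀ n : ℕ,
      (n : ℝ)⁻¹ * ∑ j ∈ Finset.range n, (Y j ω - βhat n ω * X j ω) ^ 2 =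
        ((n : ℝ)⁻¹ * ∑ j ∈ Finset.range n, (Y j ω - β1 * X j ω) ^ 2) +
          (2 * (β1 - βhat n ω)) *
            ((n : ℝ)⁻¹ * ∑ j ∈ Finset.range n, (Y j ω - β1 * X j ω) * X j ω) +
          (β1 - βhat n ω) ^ 2 * ((n : ℝ)⁻¹ * ∑ j ∈ Finset.range n, X j ω ^ 2) := by
    intro n
    have expand : ∑ j ∈ Finset.range n, (Y j ω - βhat n ω * X j ω) ^ 2 =
        ∑ j ∈ Finset.range n, ((Y j ω - β1 * X j ω) ^ 2 +
          (2 * (β1 - βhat n ω)) * ((Y j ω - β1 * X j ω) * X j ω) +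
          (β1 - βhat n ω) ^ 2 * X j ω ^ 2) :=
      Finset.sum_congr rfl fun j _ => by ring
    rw [expand, Finset.sum_add_distrib, Finset.sum_add_distrib, ← Finset.mul_sum,
      ← Finset.mul_sum]
    ring
  have hfinal : Tendsto
      (fun n : ℕ => ((n : ℝ)⁻¹ * ∑ j ∈ Finset.range n, (Y j ω - β1 * X j ω) ^ 2) +
        (2 * (β1 - βhat n ω)) *
          ((n : ℝ)⁻¹ * ∑ j ∈ Finset.range n, (Y j ω - β1 * X j ω) * X j ω) +
        (β1 - βhat n ω) ^ 2 * ((n : ℝ)⁻¹ * ∑ j ∈ Finset.range n, X j ω ^ 2)) atTop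
      (𝓝 (variance U μ + (2 * 0) * (∫ ω, (Y 0 ω - β1 * X 0 ω) * X 0 ω ∂μ) +
        0 ^ 2 * (∫ ω, X 0 ω ^ 2 ∂μ))) :=
    ((hw3.add (((hc.const_mul 2).mul hw4))).add ((hc.pow 2).mul hw5))
  have : Tendsto
      (fun n : ℕ => (n : ℝ)⁻¹ * ∑ j ∈ Finset.range n, (Y j ω - βhat n ω * X j ω) ^ 2) atTop
      (𝓝 (variance U μ + (2 * 0) * (∫ ω, (Y 0 ω - β1 * X 0 ω) * X 0 ω ∂μ) +
        0 ^ 2 * (∫ ω, X 0 ω ^ 2 ∂μ))) := by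
    refine hfinal.congr fun n => (hsum n).symm
  simpa using this
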